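/- Uniqueness of homogeneous coordinates: Let V1 be a vector space of dimension at least 3 over a division ring K1 and V2 a vector space over a division ring K2. If φ : ℙ(V1) → ℙ(V2) is a bijection which preserves and reflects collinearity — for all nonzero x,y,z ∈ V1, x ∈ span_{K1}{y,z} if and only if a representative of φ([x]) lies in the span_{K2} of representatives of φ([y]) and φ([z]) — then there exist a ring isomorphism σ : K1 → K2 and a bijective σ-semilinear map f : V1 → V2 such that φ([v]) = [f(v)] for every nonzero v ∈ V1. -/

import Mathlib

open Submodule
open scoped Classical

namespace FTPGaux

variable {K1 K2 V1 V2 : Type*}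
    [DivisionRing K1] [DivisionRing K2]
    [AddCommGroup V1] [Module K1 V1] [AddCommGroup V2] [Module K2 V2]

section Helpers

variable {K V : Type*} [DivisionRing K] [AddCommGroup V] [Module K V]

theorem nz_of_not_mem {a b : V} (h : a ∉ span K {b}) : a ≠ 0 := by
  rintro rfl; exact h (zero_mem _)

theorem not_mem_symm {a b : V} (hb : b ≠ 0) (h : a ∉ span K {b}) : b ∉ span K {a} := by
  intro hba
  rcases mem_span_singleton.1 hba with ⟨c, rfl⟩
  rcases eq_or_ne c 0 with rfl | hc
  · exact hb (zero_smul K a)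
  · exact h (mem_span_singleton.2 ⟨c⁻¹, by rw [inv_smul_smul₀ hc]⟩)

/-- coefficient uniqueness for an "independent" pair. -/
theorem zero2 {a b : V} (hab : a ∉ span K {b}) (hb : b ≠ 0) {c d : K}
    (h : c • a + d • b = 0) : c = 0 ∧ d = 0 := by
  rcases eq_or_ne c 0 with rfl | hc
  · rw [zero_smul, zero_add] at h
    exact ⟨rfl, by simpa [hb] using (smul_eq_zero.1 h)⟩
  · exfalso
    apply hab
    have h1 : c • a = -(d • b) := eq_neg_of_add_eq_zero_left h
    have : a = c⁻¹ • (-(d • b)) := by rw [← h1, inv_smul_smul₀ hc]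
    rw [this]
    exact smul_mem _ _ (neg_mem (smul_mem _ _ (mem_span_singleton_self b)))

theorem uniq2 {a b : V} (hab : a ∉ span K {b}) (hb : b ≠ 0) {c d c' d' : K}
    (h : c • a + d • b = c' • a + d' • b) : c = c' ∧ d = d' := by
  have h0 : (c - c') • a + (d - d') • b = 0 := by
    rw [sub_smul, sub_smul]; rw [← sub_eq_zero] at h; rw [← h]; abel
  obtain ⟨h1, h2⟩ := zero2 hab hb h0
  exact ⟨sub_eq_zero.1 h1, sub_eq_zero.1 h2⟩

theorem zero3 {a b c : V} (hab : a ∉ span K {b}) (hb : b ≠ 0)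
    (hc : c ∉ span K {a, b}) {p q r : K}
    (h : p • a + q • b + r • c = 0) : p = 0 ∧ q = 0 ∧ r = 0 := by
  rcases eq_or_ne r 0 with rfl | hr
  · rw [zero_smul, add_zero] at h
    obtain ⟨h1, h2⟩ := zero2 hab hb h
    exact ⟨h1, h2, rfl⟩
  · exfalso
    apply hc
    have : c = r⁻¹ • (-(p • a + q • b)) := by
      have : r • c = -(p • a + q • b) := by
        have := eq_neg_of_add_eq_zero_right h; rw [this]
      rw [← this, inv_smul_smul₀ hr]
    rw [this]
    exact smul_mem _ _ (neg_mem (mem_span_pair.2 ⟨p, q, rfl⟩))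

theorem uniq3 {a b c : V} (hab : a ∉ span K {b}) (hb : b ≠ 0)
    (hc : c ∉ span K {a, b}) {p q r p' q' r' : K}
    (h : p • a + q • b + r • c = p' • a + q' • b + r' • c) :
    p = p' ∧ q = q' ∧ r = r' := by
  have h0 : (p - p') • a + (q - q') • b + (r - r') • c = 0 := by
    simp only [sub_smul]; rw [← sub_eq_zero] at h; rw [← h]; abel
  obtain ⟨h1, h2, h3⟩ := zero3 hab hb hc h0
  exact ⟨sub_eq_zero.1 h1, sub_eq_zero.1 h2, sub_eq_zero.1 h3⟩

theorem nz_of_not_mem_pair {a u v : V} (h : a ∉ span K {u, v}) : a ≠ 0 := by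
  rintro rfl; exact h (zero_mem _)

theorem single_le_pair_left {a b : V} : span K {a} ≤ span K {a, b} :=
  span_mono (Set.singleton_subset_iff.2 (Set.mem_insert _ _))

theorem single_le_pair_right {a b : V} : span K {b} ≤ span K {a, b} :=
  span_mono (Set.singleton_subset_iff.2 (Set.mem_insert_iff.2 (Or.inr rfl)))

theorem add_nz {a x : V} (hx : x ∉ span K {a}) : a + x ≠ 0 := by
  intro h0
  have : x = (-1 : K) • a := by
    rw [neg_smul, one_smul, eq_neg_iff_add_eq_zero, add_comm]; exact h0
  exact hx (this ▸ smul_mem _ _ (mem_span_singleton_self a))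

theorem mem_pair_left (a b : V) : a ∈ span K {a, b} :=
  subset_span (Set.mem_insert _ _)

theorem mem_pair_right (a b : V) : b ∈ span K {a, b} :=
  subset_span (Set.mem_insert_iff.2 (Or.inr rfl))

theorem span_pair_symm (a b : V) : span K {a, b} = span K {b, a} := by
  rw [Set.pair_comm]

end Helpers

/-- All the data needed for the vector-level fundamental theorem of projective geometry. -/
structure FT (K1 K2 V1 V2 : Type*)
    [DivisionRing K1] [DivisionRing K2]
    [AddCommGroup V1] [Module K1 V1] [AddCommGroup V2] [Module K2 V2] where
  g : V1 → V2
  hg0 : ∀ x, x ≠ 0 → g x ≠ 0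
  hsmul : ∀ (c : K1) (x : V1), c ≠ 0 → x ≠ 0 → g (c • x) = g x
  hcol : ∀ x y z, x ≠ 0 → y ≠ 0 → z ≠ 0 →
    (x ∈ span K1 {y, z} ↔ g x ∈ span K2 {g y, g z})
  hsurj : ∀ w, w ≠ 0 → ∃ x, x ≠ 0 ∧ ∃ c : K2, c ≠ 0 ∧ g x = c • w
  houtside : ∀ u v : V1, ∃ w, w ∉ span K1 {u, v}

namespace FT

variable (E : FT K1 K2 V1 V2)

theorem col1 {x y : V1} (hx : x ≠ 0) (hy : y ≠ 0) :
    x ∈ span K1 {y} ↔ E.g x ∈ span K2 {E.g y} := by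
  have := E.hcol x y y hx hy hy
  rwa [Set.pair_eq_singleton, Set.pair_eq_singleton] at this

theorem img_notmem {x y : V1} (hy : y ≠ 0) (h : x ∉ span K1 {y}) :
    E.g x ∉ span K2 {E.g y} := by
  rw [← E.col1 (nz_of_not_mem h) hy]; exact h

theorem img_notmem_pair {x y z : V1} (hx : x ≠ 0) (hy : y ≠ 0) (hz : z ≠ 0)
    (h : x ∉ span K1 {y, z}) : E.g x ∉ span K2 {E.g y, E.g z} := by
  rw [← E.hcol x y z hx hy hz]; exact h

theorem img_mem_pair {x y z : V1} (hx : x ≠ 0) (hy : y ≠ 0) (hz : z ≠ 0)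
    (h : x ∈ span K1 {y, z}) : E.g x ∈ span K2 {E.g y, E.g z} :=
  (E.hcol x y z hx hy hz).1 h

/-- Existence and uniqueness of the normalized representative. -/
theorem exists_h {a x : V1} (ha : a ≠ 0) (hx : x ∉ span K1 {a}) :
    ∃! X : V2, (∃ c : K2, c ≠ 0 ∧ X = c • E.g x) ∧
      (∃ d : K2, d ≠ 0 ∧ E.g a + X = d • E.g (a + x)) := by
  have hx0 : x ≠ 0 := nz_of_not_mem hx
  have hax : a + x ≠ 0 := by
    intro h0
    have : x = (-1 : K1) • a := by
      rw [neg_smul, one_smul, eq_neg_iff_add_eq_zero, add_comm]; exact h0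
    exact hx (this ▸ smul_mem _ _ (mem_span_singleton_self a))
  have hanx : a ∉ span K1 {x} := not_mem_symm ha hx
  have hgxga : E.g x ∉ span K2 {E.g a} := E.img_notmem ha hx
  have hgagx : E.g a ∉ span K2 {E.g x} := E.img_notmem hx0 hanx
  have hga0 : E.g a ≠ 0 := E.hg0 a ha
  have hgx0 : E.g x ≠ 0 := E.hg0 x hx0
  have h1 : E.g (a + x) ∈ span K2 {E.g a, E.g x} :=
    E.img_mem_pair hax ha hx0 (mem_span_pair.2 ⟨1, 1, by simp⟩)
  have h2 : E.g (a + x) ∉ span K2 {E.g a} := by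
    apply E.img_notmem ha
    intro hmem
    rcases mem_span_singleton.1 hmem with ⟨c, hc⟩
    exact hx (mem_span_singleton.2 ⟨c - 1, by rw [sub_smul, one_smul, hc]; abel⟩)
  have h3 : E.g (a + x) ∉ span K2 {E.g x} := by
    apply E.img_notmem hx0
    intro hmem
    rcases mem_span_singleton.1 hmem with ⟨c, hc⟩
    exact hanx (mem_span_singleton.2 ⟨c - 1, by rw [sub_smul, one_smul, hc]; abel⟩)
  rcases mem_span_pair.1 h1 with ⟨p, q, hpq⟩
  have hp : p ≠ 0 := by
    rintro rfl
    exact h3 (mem_span_singleton.2 ⟨q, by rw [← hpq, zero_smul, zero_add]⟩)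
  have hq : q ≠ 0 := by
    rintro rfl
    exact h2 (mem_span_singleton.2 ⟨p, by rw [← hpq, zero_smul, add_zero]⟩)
  refine ⟨(p⁻¹ * q) • E.g x, ⟨⟨p⁻¹ * q, by simp [hp, hq], rfl⟩,
    ⟨p⁻¹, inv_ne_zero hp, ?_⟩⟩, ?_⟩
  · rw [← hpq, smul_add, smul_smul, inv_mul_cancel₀ hp, one_smul, smul_smul]
  · rintro X ⟨⟨c, hc, rfl⟩, ⟨d, hd, hX⟩⟩
    rw [← hpq, smul_add, smul_smul, smul_smul] at hX
    have : (1 : K2) • E.g a + c • E.g x = (d * p) • E.g a + (d * q) • E.g x := by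
      rw [one_smul]; exact hX
    obtain ⟨e1, e2⟩ := uniq2 hgagx hgx0 this
    have hdp : d = p⁻¹ := eq_inv_of_mul_eq_one_left e1.symm
    rw [e2, hdp]

/-- The normalized representative of the image of `x`, relative to base point `a`. -/
noncomputable def h (a x : V1) (ha : a ≠ 0) (hx : x ∉ span K1 {a}) : V2 :=
  (E.exists_h ha hx).exists.choose

theorem h_prop {a x : V1} (ha : a ≠ 0) (hx : x ∉ span K1 {a}) :
    (∃ c : K2, c ≠ 0 ∧ E.h a x ha hx = c • E.g x) ∧
      (∃ d : K2, d ≠ 0 ∧ E.g a + E.h a x ha hx = d • E.g (a + x)) :=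
  (E.exists_h ha hx).exists.choose_spec

theorem h_uniq {a x : V1} (ha : a ≠ 0) (hx : x ∉ span K1 {a}) (X : V2)
    (h1 : ∃ c : K2, c ≠ 0 ∧ X = c • E.g x)
    (h2 : ∃ d : K2, d ≠ 0 ∧ E.g a + X = d • E.g (a + x)) :
    X = E.h a x ha hx := by
  obtain ⟨X0, hX0, hu⟩ := E.exists_h ha hx
  rw [hu X ⟨h1, h2⟩, hu _ (E.h_prop ha hx)]

section LemA

variable {a x y : V1} (ha : a ≠ 0) (hx : x ∉ span K1 {a}) (hy : y ∉ span K1 {a, x})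

include ha hx hy

theorem sum_not_mem : x + y ∉ span K1 {a} := by
  intro hmem
  rcases mem_span_singleton.1 hmem with ⟨c, hc⟩
  exact hy (mem_span_pair.2 ⟨c, -1, by rw [neg_smul, one_smul, hc]; abel⟩)

theorem lemA :
    E.h a (x + y) ha (sum_not_mem ha hx hy) = E.h a x ha hx +
      E.h a y ha (fun hmem => hy (single_le_pair_left hmem)) := by
  have hx0 : x ≠ 0 := nz_of_not_mem hx
  have hy0 : y ≠ 0 := nz_of_not_mem_pair hy
  have hya : y ∉ span K1 {a} := fun hmem => hy (single_le_pair_left hmem)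
  have hyx : y ∉ span K1 {x} := fun hmem => hy (single_le_pair_right hmem)
  have hax : a ∉ span K1 {x} := not_mem_symm ha hx
  have hxy' : x ∉ span K1 {y} := not_mem_symm hx0 hyx
  have hax0 : a + x ≠ 0 := add_nz hx
  have hay0 : a + y ≠ 0 := add_nz hya
  have hxy0 : x + y ≠ 0 := add_nz hyx
  have hxya : x + y ∉ span K1 {a} := sum_not_mem ha hx hy
  have haxy0 : a + x + y ≠ 0 := by
    intro h0
    refine hy (mem_span_pair.2 ⟨-1, -1, ?_⟩)
    rw [neg_smul, neg_smul, one_smul, one_smul, ← neg_add, neg_eq_iff_add_eq_zero]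
    exact h0
  have hAX : E.g a ∉ span K2 {E.g x} := E.img_notmem hx0 hax
  have hX0nz : E.g x ≠ 0 := E.hg0 x hx0
  have hYAX : E.g y ∉ span K2 {E.g a, E.g x} := E.img_notmem_pair hy0 ha hx0 hy
  obtain ⟨⟨ξ, hξ, hhx⟩, ⟨δ, hδ, hhx2⟩⟩ := E.h_prop ha hx
  obtain ⟨⟨η, hη, hhy⟩, ⟨ε, hε, hhy2⟩⟩ := E.h_prop ha hya
  have hgax : E.g (a + x) = δ⁻¹ • E.g a + (δ⁻¹ * ξ) • E.g x := by
    have := congrArg (fun w => δ⁻¹ • w) hhx2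
    simp only [smul_add, smul_smul, inv_mul_cancel₀ hδ, one_smul] at this
    rw [← this, hhx, smul_smul]
  have hgay : E.g (a + y) = ε⁻¹ • E.g a + (ε⁻¹ * η) • E.g y := by
    have := congrArg (fun w => ε⁻¹ • w) hhy2
    simp only [smul_add, smul_smul, inv_mul_cancel₀ hε, one_smul] at this
    rw [← this, hhy, smul_smul]
  have m1 : E.g (a + x + y) ∈ span K2 {E.g (a + x), E.g y} :=
    E.img_mem_pair haxy0 hax0 hy0 (mem_span_pair.2 ⟨1, 1, by rw [one_smul, one_smul]⟩)
  have m2 : E.g (a + x + y) ∈ span K2 {E.g (a + y), E.g x} :=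
    E.img_mem_pair haxy0 hay0 hx0 (mem_span_pair.2 ⟨1, 1, by
      rw [one_smul, one_smul]; abel⟩)
  rcases mem_span_pair.1 m1 with ⟨r, s, hrs⟩
  rcases mem_span_pair.1 m2 with ⟨r', s', hrs'⟩
  have hr : r ≠ 0 := by
    rintro rfl
    have : E.g (a + x + y) ∈ span K2 {E.g y} :=
      mem_span_singleton.2 ⟨s, by rw [← hrs, zero_smul, zero_add]⟩
    have h5 : a + x + y ∈ span K1 {y} := (E.col1 haxy0 hy0).2 this
    rcases mem_span_singleton.1 h5 with ⟨c, hc⟩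
    have h6 : a + x = (c - 1) • y := by rw [sub_smul, one_smul, hc]; abel
    rcases eq_or_ne (c - 1) 0 with h7 | h7
    · rw [h7, zero_smul] at h6; exact hax0 h6
    · exact hy (mem_span_pair.2 ⟨(c-1)⁻¹, (c-1)⁻¹, by
        rw [← smul_add, h6, smul_smul, inv_mul_cancel₀ h7, one_smul]⟩)
  have e1 : E.g (a + x + y) =
      (r * δ⁻¹) • E.g a + (r * (δ⁻¹ * ξ)) • E.g x + s • E.g y := by
    rw [← hrs, hgax]; simp only [smul_add, smul_smul]
  have e2 : E.g (a + x + y) =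
      (r' * ε⁻¹) • E.g a + s' • E.g x + (r' * (ε⁻¹ * η)) • E.g y := by
    rw [← hrs', hgay]; simp only [smul_add, smul_smul]; abel
  obtain ⟨c1, c2, c3⟩ := uniq3 hAX hX0nz hYAX (e1.symm.trans e2)
  have htnz : r * δ⁻¹ ≠ 0 := mul_ne_zero hr (inv_ne_zero hδ)
  have k1 : r * (δ⁻¹ * ξ) = (r * δ⁻¹) * ξ := by rw [mul_assoc]
  have k2 : s = (r * δ⁻¹) * η := by rw [c3, c1, mul_assoc]
  have e3 : E.g (a + x + y) =
      (r * δ⁻¹) • (E.g a + E.h a x ha hx + E.h a y ha hya) := by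
    rw [e1, k1, k2, hhx, hhy, smul_add, smul_add, smul_smul, smul_smul]
  have m3 : E.g (x + y) ∈ span K2 {E.g a, E.g (a + x + y)} :=
    E.img_mem_pair hxy0 ha haxy0 (mem_span_pair.2 ⟨-1, 1, by
      rw [neg_smul, one_smul, one_smul]; abel⟩)
  have m4 : E.g (x + y) ∈ span K2 {E.g x, E.g y} :=
    E.img_mem_pair hxy0 hx0 hy0 (mem_span_pair.2 ⟨1, 1, by rw [one_smul, one_smul]⟩)
  rcases mem_span_pair.1 m3 with ⟨u, v, huv⟩
  rcases mem_span_pair.1 m4 with ⟨p, q, hpq2⟩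
  have e4 : E.g (x + y) = (u + v * (r * δ⁻¹)) • E.g a +
      (v * (r * δ⁻¹) * ξ) • E.g x + (v * (r * δ⁻¹) * η) • E.g y := by
    rw [← huv, e3, hhx, hhy]
    simp only [smul_add, smul_smul, add_smul, mul_assoc]
    abel
  have e5 : E.g (x + y) = (0 : K2) • E.g a + p • E.g x + q • E.g y := by
    rw [← hpq2, zero_smul, zero_add]
  obtain ⟨d1, d2, d3⟩ := uniq3 hAX hX0nz hYAX (e4.symm.trans e5)
  have hp : p ≠ 0 := by
    rintro rfl
    have : E.g (x + y) ∈ span K2 {E.g y} :=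
      mem_span_singleton.2 ⟨q, by rw [← hpq2, zero_smul, zero_add]⟩
    have h5 : x + y ∈ span K1 {y} := (E.col1 hxy0 hy0).2 this
    rcases mem_span_singleton.1 h5 with ⟨c, hc⟩
    exact hxy' (mem_span_singleton.2 ⟨c - 1, by rw [sub_smul, one_smul, hc]; abel⟩)
  have hvt : v * (r * δ⁻¹) ≠ 0 := by
    intro h0
    exact hp (by rw [← d2, h0, zero_mul])
  have e6 : E.g (x + y) = (v * (r * δ⁻¹)) • (E.h a x ha hx + E.h a y ha hya) := by
    rw [e4, hhx, hhy, d1, zero_smul, zero_add, smul_add, smul_smul, smul_smul]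
  have key := E.h_uniq ha hxya (E.h a x ha hx + E.h a y ha hya)
    ⟨(v * (r * δ⁻¹))⁻¹, inv_ne_zero hvt, by
      rw [e6, smul_smul, inv_mul_cancel₀ hvt, one_smul]⟩
    ⟨(r * δ⁻¹)⁻¹, inv_ne_zero htnz, by
      rw [show a + (x + y) = a + x + y by abel, e3, smul_smul, inv_mul_cancel₀ htnz,
        one_smul, add_assoc]⟩
  exact key.symm

end LemA

theorem h_congr {a : V1} (ha : a ≠ 0) {x x' : V1} (hx : x ∉ span K1 {a})
    (hx' : x' ∉ span K1 {a}) (e : x = x') : E.h a x ha hx = E.h a x' ha hx' := by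
  subst e; rfl

theorem neg_not_mem' {a x : V1} (hx : x ∉ span K1 {a}) : -x ∉ span K1 {a} := by
  intro hmem
  exact hx (by rw [← neg_neg x]; exact neg_mem hmem)

theorem mem_add_not_mem' {a x b : V1} (hx : x ∈ span K1 {a}) (hb : b ∉ span K1 {a}) :
    x + b ∉ span K1 {a} := by
  intro hmem
  exact hb (by have := sub_mem hmem hx; rwa [add_sub_cancel_left] at this)

theorem span_pair_le_of_mem {a y x : V1} (hy : y ∈ span K1 {a, x}) :
    span K1 {a, y} ≤ span K1 {a, x} :=
  span_le.2 (Set.insert_subset (mem_pair_left a x) (Set.singleton_subset_iff.2 hy))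

/-- Additivity of `h` whenever both points and their sum avoid `span {a}`. -/
theorem lemA' {a x y : V1} (ha : a ≠ 0) (hx : x ∉ span K1 {a}) (hy : y ∉ span K1 {a})
    (hxy : x + y ∉ span K1 {a}) :
    E.h a (x + y) ha hxy = E.h a x ha hx + E.h a y ha hy := by
  by_cases hyP : y ∈ span K1 {a, x}
  · obtain ⟨z, hz⟩ := E.houtside a x
    have hz_ya : z ∉ span K1 {a, y} := fun hm => hz (span_pair_le_of_mem hyP hm)
    have hxyP : x + y ∈ span K1 {a, x} := add_mem (mem_pair_right a x) hyP
    have hz_xya : z ∉ span K1 {a, x + y} := fun hm => hz (span_pair_le_of_mem hxyP hm)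
    have hza : z ∉ span K1 {a} := fun hm => hz (single_le_pair_left hm)
    have hyz_ax : y + z ∉ span K1 {a, x} := fun hm => hz (by
      have := sub_mem hm hyP; rwa [add_sub_cancel_left] at this)
    have e1 := E.lemA ha hxy hz_xya
    have e2 := E.lemA ha hx hyz_ax
    have e3 := E.lemA ha hy hz_ya
    have hyza : y + z ∉ span K1 {a} := sum_not_mem ha hy hz_ya
    have c1 : E.h a (x + y + z) ha (sum_not_mem ha hxy hz_xya) =
        E.h a (x + (y + z)) ha (sum_not_mem ha hx hyz_ax) :=
      E.h_congr ha _ _ (by abel)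
    rw [c1, e2, e3] at e1
    refine add_right_cancel (b := E.h a z ha hza) ?_
    rw [← e1, add_assoc]
  · exact E.lemA ha hx hyP

theorem lemN {a x : V1} (ha : a ≠ 0) (hx : x ∉ span K1 {a}) :
    E.h a (-x) ha (neg_not_mem' hx) = - E.h a x ha hx := by
  obtain ⟨z, hz⟩ := E.houtside a x
  have hza : z ∉ span K1 {a} := fun hm => hz (single_le_pair_left hm)
  have hxza : x + z ∉ span K1 {a} := sum_not_mem ha hx hz
  have hnx : -x ∉ span K1 {a} := neg_not_mem' hx
  have hsum : -x + (x + z) ∉ span K1 {a} := by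
    have : -x + (x + z) = z := by abel
    rw [this]; exact hza
  have e1 := E.lemA' ha hnx hxza hsum
  have e2 := E.lemA' ha hx hza hxza
  have c1 : E.h a (-x + (x + z)) ha hsum = E.h a z ha hza :=
    E.h_congr ha _ _ (by abel)
  rw [c1, e2] at e1
  have h0 : E.h a (-x) ha hnx + E.h a x ha hx = 0 := by
    refine add_right_cancel (b := E.h a z ha hza) ?_
    rw [zero_add, add_assoc, ← e1]
  rw [eq_neg_iff_add_eq_zero]
  exact h0

theorem lemW1 {a x b b' : V1} (ha : a ≠ 0) (hx : x ∈ span K1 {a}) (hx0 : x ≠ 0)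
    (hb : b ∉ span K1 {a}) (hb' : b' ∉ span K1 {a, b}) :
    E.h a (x + b) ha (mem_add_not_mem' hx hb) - E.h a b ha hb =
      E.h a (x + b') ha (mem_add_not_mem' hx (fun hm => hb' (single_le_pair_left hm))) -
        E.h a b' ha (fun hm => hb' (single_le_pair_left hm)) := by
  have hb'a : b' ∉ span K1 {a} := fun hm => hb' (single_le_pair_left hm)
  have hxb : x + b ∉ span K1 {a} := mem_add_not_mem' hx hb
  have hxb' : x + b' ∉ span K1 {a} := mem_add_not_mem' hx hb'a
  have hbb' : b + b' ∉ span K1 {a} := sum_not_mem ha hb hb'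
  have hxbb' : x + b + b' ∉ span K1 {a} := by
    have e : x + b + b' = x + (b + b') := by abel
    rw [e]; exact mem_add_not_mem' hx hbb'
  have hxb'b : x + b' + b ∉ span K1 {a} := by
    have e : x + b' + b = x + b + b' := by abel
    rw [e]; exact hxbb'
  have e1 := E.lemA' ha hxb hb'a hxbb'
  have e2 := E.lemA' ha hxb' hb hxb'b
  have c1 : E.h a (x + b' + b) ha hxb'b = E.h a (x + b + b') ha hxbb' :=
    E.h_congr ha _ _ (by abel)
  rw [c1, e1] at e2
  rw [sub_eq_sub_iff_add_eq_add]
  exact e2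

theorem lemW {a x b b' : V1} (ha : a ≠ 0) (hx : x ∈ span K1 {a}) (hx0 : x ≠ 0)
    (hb : b ∉ span K1 {a}) (hb' : b' ∉ span K1 {a}) :
    E.h a (x + b) ha (mem_add_not_mem' hx hb) - E.h a b ha hb =
      E.h a (x + b') ha (mem_add_not_mem' hx hb') - E.h a b' ha hb' := by
  by_cases hP : b' ∈ span K1 {a, b}
  · obtain ⟨z, hz⟩ := E.houtside a b
    have hz' : z ∉ span K1 {a, b'} := fun hm => hz (span_pair_le_of_mem hP hm)
    have r1 := E.lemW1 ha hx hx0 hb hz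
    have r2 := E.lemW1 ha hx hx0 hb' hz'
    rw [r1, r2]
  · exact E.lemW1 ha hx hx0 hb hP

section Fmap

variable {a b : V1} (ha : a ≠ 0) (hb : b ∉ span K1 {a})

/-- The candidate additive map, relative to base points `a` and `b`. -/
noncomputable def F (a b : V1) (ha : a ≠ 0) (hb : b ∉ span K1 {a}) (x : V1) : V2 :=
  if hx : x ∈ span K1 {a} then
    if hx0 : x = 0 then 0
    else E.h a (x + b) ha (mem_add_not_mem' hx hb) - E.h a b ha hb
  else E.h a x ha hx

theorem F_zero : E.F a b ha hb 0 = 0 := by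
  unfold F
  rw [dif_pos (zero_mem _), dif_pos rfl]

theorem F_off {x : V1} (hx : x ∉ span K1 {a}) : E.F a b ha hb x = E.h a x ha hx := by
  unfold F
  rw [dif_neg hx]

theorem F_in {x : V1} (hx : x ∈ span K1 {a}) (hx0 : x ≠ 0) :
    E.F a b ha hb x = E.h a (x + b) ha (mem_add_not_mem' hx hb) - E.h a b ha hb := by
  unfold F
  rw [dif_pos hx, dif_neg hx0]

theorem F_in' {x b' : V1} (hx : x ∈ span K1 {a}) (hx0 : x ≠ 0) (hb' : b' ∉ span K1 {a}) :
    E.F a b ha hb x = E.h a (x + b') ha (mem_add_not_mem' hx hb') - E.h a b' ha hb' := by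
  rw [E.F_in ha hb hx hx0]
  exact E.lemW ha hx hx0 hb hb'

theorem F_neg_off {x : V1} (hx : x ∉ span K1 {a}) :
    E.F a b ha hb (-x) = - E.F a b ha hb x := by
  rw [E.F_off ha hb hx, E.F_off ha hb (neg_not_mem' hx)]
  exact E.lemN ha hx

theorem F_add (x y : V1) :
    E.F a b ha hb (x + y) = E.F a b ha hb x + E.F a b ha hb y := by
  rcases eq_or_ne x 0 with rfl | hx0
  · rw [zero_add, E.F_zero, zero_add]
  rcases eq_or_ne y 0 with rfl | hy0
  · rw [add_zero, E.F_zero, add_zero]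
  rcases eq_or_ne (x + y) 0 with hxy0 | hxy0
  · -- y = -x
    have hyx : y = -x := by rw [eq_neg_iff_add_eq_zero, add_comm]; exact hxy0
    subst hyx
    rw [hxy0, E.F_zero]
    by_cases hx : x ∈ span K1 {a}
    · rw [E.F_in ha hb hx hx0]
      have hxb : x + b ∉ span K1 {a} := mem_add_not_mem' hx hb
      have hnx : -x ∈ span K1 {a} := neg_mem hx
      have hnx0 : -x ≠ 0 := neg_ne_zero.2 hx0
      rw [E.F_in' ha hb hnx hnx0 hxb]
      have c1 : E.h a (-x + (x + b)) ha (mem_add_not_mem' hnx hxb) =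
          E.h a b ha hb := E.h_congr ha _ _ (by abel)
      rw [c1]
      abel
    · rw [E.F_neg_off ha hb hx]
      abel
  -- now x, y, x + y all nonzero
  by_cases hx : x ∈ span K1 {a} <;> by_cases hy : y ∈ span K1 {a}
  · -- both in span a
    have hxy : x + y ∈ span K1 {a} := add_mem hx hy
    have hxb : x + b ∉ span K1 {a} := mem_add_not_mem' hx hb
    rw [E.F_in ha hb hx hx0, E.F_in' ha hb hy hy0 hxb, E.F_in ha hb hxy hxy0]
    have c1 : E.h a (y + (x + b)) ha (mem_add_not_mem' hy hxb) =
        E.h a (x + y + b) ha (mem_add_not_mem' hxy hb) := E.h_congr ha _ _ (by abel)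
    rw [c1]
    abel
  · -- x ∈ span a, y ∉
    have hxy : x + y ∉ span K1 {a} := by
      intro hm
      exact hy (by have := sub_mem hm hx; rwa [add_sub_cancel_left] at this)
    rw [E.F_off ha hb hxy, E.F_in' ha hb hx hx0 hy, E.F_off ha hb hy]
    have c1 : E.h a (x + y) ha hxy = E.h a (x + y) ha (mem_add_not_mem' hx hy) := rfl
    rw [c1]
    abel
  · -- x ∉ span a, y ∈
    have hxy : x + y ∉ span K1 {a} := by
      intro hm
      exact hx (by have := sub_mem hm hy; rwa [add_sub_cancel_right] at this)
    rw [E.F_off ha hb hxy, E.F_in' ha hb hy hy0 hx, E.F_off ha hb hx]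
    have c1 : E.h a (y + x) ha (mem_add_not_mem' hy hx) =
        E.h a (x + y) ha hxy := E.h_congr ha _ _ (by abel)
    rw [c1]
    abel
  · -- both out
    by_cases hxy : x + y ∈ span K1 {a}
    · -- sum falls in span a
      have hnx : -x ∉ span K1 {a} := neg_not_mem' hx
      rw [E.F_in' ha hb hxy hxy0 hnx, E.F_off ha hb hx, E.F_off ha hb hy]
      have c1 : E.h a (x + y + -x) ha (mem_add_not_mem' hxy hnx) =
          E.h a y ha hy := E.h_congr ha _ _ (by abel)
      rw [c1, E.lemN ha hx]
      abel
    · rw [E.F_off ha hb hxy, E.F_off ha hb hx, E.F_off ha hb hy]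
      exact E.lemA' ha hx hy hxy

theorem F_dir {x : V1} (hx0 : x ≠ 0) :
    ∃ c : K2, c ≠ 0 ∧ E.F a b ha hb x = c • E.g x := by
  by_cases hx : x ∈ span K1 {a}
  case neg =>
    rw [E.F_off ha hb hx]
    exact (E.h_prop ha hx).1
  case pos =>
  obtain ⟨z, hz⟩ := E.houtside a b
  have hza : z ∉ span K1 {a} := fun hm => hz (single_le_pair_left hm)
  have hab : a ∉ span K1 {b} := not_mem_symm ha hb
  -- x = λ • a with λ ≠ 0, so g x = g a
  obtain ⟨lam, hlam⟩ := mem_span_singleton.1 hx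
  have hlam0 : lam ≠ 0 := by rintro rfl; rw [zero_smul] at hlam; exact hx0 hlam.symm
  have hgx : E.g x = E.g a := by rw [← hlam]; exact E.hsmul lam a hlam0 ha
  -- F x lies in span {g a, g b} and in span {g a, g z}
  have hxb : x + b ∉ span K1 {a} := mem_add_not_mem' hx hb
  have hxz : x + z ∉ span K1 {a} := mem_add_not_mem' hx hza
  obtain ⟨c1, hc1, hd1⟩ := (E.h_prop ha hxb).1
  obtain ⟨c2, hc2, hd2⟩ := (E.h_prop ha hb).1
  obtain ⟨c3, hc3, hd3⟩ := (E.h_prop ha hxz).1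
  obtain ⟨c4, hc4, hd4⟩ := (E.h_prop ha hza).1
  have hxb0 : x + b ≠ 0 := nz_of_not_mem hxb
  have hxz0 : x + z ≠ 0 := nz_of_not_mem hxz
  have hb0 : b ≠ 0 := nz_of_not_mem hb
  have hz0 : z ≠ 0 := nz_of_not_mem hza
  have m1 : E.g (x + b) ∈ span K2 {E.g a, E.g b} := by
    refine E.img_mem_pair hxb0 ha hb0 (mem_span_pair.2 ⟨lam, 1, ?_⟩)
    rw [one_smul, hlam]
  have m2 : E.g (x + z) ∈ span K2 {E.g a, E.g z} := by
    refine E.img_mem_pair hxz0 ha hz0 (mem_span_pair.2 ⟨lam, 1, ?_⟩)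
    rw [one_smul, hlam]
  rcases mem_span_pair.1 m1 with ⟨p1, q1, hpq1⟩
  rcases mem_span_pair.1 m2 with ⟨p2, q2, hpq2⟩
  -- two expressions for F x
  have ex1 : E.F a b ha hb x = (c1 * p1) • E.g a + (c1 * q1 - c2) • E.g b := by
    rw [E.F_in ha hb hx hx0, hd1, hd2, ← hpq1]
    simp only [smul_add, smul_smul, sub_smul]
    abel
  have ex2 : E.F a b ha hb x = (c3 * p2) • E.g a + (c3 * q2 - c4) • E.g z := by
    rw [E.F_in' ha hb hx hx0 hza, hd3, hd4, ← hpq2]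
    simp only [smul_add, smul_smul, sub_smul]
    abel
  -- compare in basis (g a, g b, g z)
  have hgagb : E.g a ∉ span K2 {E.g b} := E.img_notmem hb0 hab
  have hgb0 : E.g b ≠ 0 := E.hg0 b hb0
  have hgzab : E.g z ∉ span K2 {E.g a, E.g b} := E.img_notmem_pair hz0 ha hb0 hz
  have ecomp : (c1 * p1) • E.g a + (c1 * q1 - c2) • E.g b + (0 : K2) • E.g z =
      (c3 * p2) • E.g a + (0 : K2) • E.g b + (c3 * q2 - c4) • E.g z := by
    rw [zero_smul, zero_smul, add_zero]
    rw [← ex1, ex2]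
    abel
  obtain ⟨k1, k2, k3⟩ := uniq3 hgagb hgb0 hgzab ecomp
  -- so F x = (c1 * p1) • g a
  have hFx : E.F a b ha hb x = (c1 * p1) • E.g a := by
    rw [ex1, k2, zero_smul, add_zero]
  -- nonzero
  have hFx0 : E.F a b ha hb x ≠ 0 := by
    rw [E.F_in ha hb hx hx0]
    intro h0
    have heq : E.h a (x + b) ha hxb = E.h a b ha hb := by
      rwa [sub_eq_zero] at h0
    rw [hd1, hd2] at heq
    have : E.g (x + b) = (c1⁻¹ * c2) • E.g b := by
      have := congrArg (fun w => c1⁻¹ • w) heq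
      simp only [smul_smul, inv_mul_cancel₀ hc1, one_smul] at this
      exact this
    have hmem : E.g (x + b) ∈ span K2 {E.g b} := mem_span_singleton.2 ⟨c1⁻¹ * c2, this.symm⟩
    have hxb_mem : x + b ∈ span K1 {b} := (E.col1 hxb0 hb0).2 hmem
    rcases mem_span_singleton.1 hxb_mem with ⟨c, hc⟩
    have : x = (c - 1) • b := by rw [sub_smul, one_smul, hc]; abel
    rw [← hlam] at this
    have : a = (lam⁻¹ * (c - 1)) • b := by
      rw [mul_smul, ← this, inv_smul_smul₀ hlam0]
    exact hab (mem_span_singleton.2 ⟨lam⁻¹ * (c - 1), this.symm⟩)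
  have hcp : c1 * p1 ≠ 0 := by
    intro h0
    rw [hFx, h0, zero_smul] at hFx0
    exact hFx0 rfl
  exact ⟨c1 * p1, hcp, by rw [hFx, hgx]⟩

theorem F_nz {x : V1} (hx0 : x ≠ 0) : E.F a b ha hb x ≠ 0 := by
  obtain ⟨c, hc, hd⟩ := E.F_dir ha hb hx0
  rw [hd]
  exact smul_ne_zero hc (E.hg0 x hx0)

end Fmap

section Sigma

variable {a b : V1} (ha : a ≠ 0) (hb : b ∉ span K1 {a})

theorem smul_cancel₀ {K V : Type*} [DivisionRing K] [AddCommGroup V] [Module K V]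
    {c d : K} {w : V} (hw : w ≠ 0) (h : c • w = d • w) : c = d := by
  by_contra hcd
  have hsub : (c - d) • w = 0 := by rw [sub_smul, h, sub_self]
  have : w = (c - d)⁻¹ • ((c - d) • w) := by
    rw [smul_smul, inv_mul_cancel₀ (sub_ne_zero.2 hcd), one_smul]
  rw [hsub, smul_zero] at this
  exact hw this

theorem smul_not_mem_smul {K V : Type*} [DivisionRing K] [AddCommGroup V] [Module K V]
    {w v : V} {c d : K} (hc : c ≠ 0) (hd : d ≠ 0) (h : w ∉ span K {v}) :
    c • w ∉ span K {d • v} := by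
  intro hm
  rcases mem_span_singleton.1 hm with ⟨e, he⟩
  refine h (mem_span_singleton.2 ⟨c⁻¹ * (e * d), ?_⟩)
  rw [mul_smul, mul_smul, he, inv_smul_smul₀ hc]

theorem F_sub (x y : V1) :
    E.F a b ha hb (x - y) = E.F a b ha hb x - E.F a b ha hb y := by
  have h1 := E.F_add ha hb (x - y) y
  rw [sub_add_cancel] at h1
  rw [eq_sub_iff_add_eq, ← h1]

theorem exists_sigma (lam : K1) :
    ∃! c : K2, E.F a b ha hb (lam • a) = c • E.F a b ha hb a := by
  have hFa : E.F a b ha hb a ≠ 0 := E.F_nz ha hb ha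
  obtain ⟨ca, hca, hda⟩ := E.F_dir ha hb ha
  rcases eq_or_ne lam 0 with rfl | hlam
  · refine ⟨0, ?_, fun c hc => ?_⟩
    · show E.F a b ha hb ((0 : K1) • a) = (0 : K2) • E.F a b ha hb a
      rw [zero_smul, E.F_zero, zero_smul]
    · rw [zero_smul, E.F_zero] at hc
      exact (smul_cancel₀ hFa (by rw [← hc, zero_smul])).symm
  · have hla : lam • a ≠ 0 := smul_ne_zero hlam ha
    obtain ⟨c', hc', hd'⟩ := E.F_dir ha hb hla
    have hgla : E.g (lam • a) = E.g a := E.hsmul lam a hlam ha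
    refine ⟨c' * ca⁻¹, ?_, fun c hc => ?_⟩
    · show E.F a b ha hb (lam • a) = (c' * ca⁻¹) • E.F a b ha hb a
      rw [hd', hgla, hda, smul_smul, mul_assoc, inv_mul_cancel₀ hca, mul_one]
    · refine (smul_cancel₀ hFa ?_).symm
      rw [← hc, hd', hgla, hda, smul_smul, mul_assoc, inv_mul_cancel₀ hca, mul_one]

/-- The field isomorphism-to-be. -/
noncomputable def sigma (lam : K1) : K2 :=
  (E.exists_sigma ha hb lam).exists.choose

theorem sigma_spec (lam : K1) :
    E.F a b ha hb (lam • a) = E.sigma ha hb lam • E.F a b ha hb a :=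
  (E.exists_sigma ha hb lam).exists.choose_spec

theorem sigma_uniq {lam : K1} {c : K2}
    (hc : E.F a b ha hb (lam • a) = c • E.F a b ha hb a) : c = E.sigma ha hb lam :=
  smul_cancel₀ (E.F_nz ha hb ha) (by rw [← hc, E.sigma_spec ha hb lam])

theorem tau_ex (lam : K1) {x : V1} (hx0 : x ≠ 0) :
    ∃ τ : K2, E.F a b ha hb (lam • x) = τ • E.F a b ha hb x := by
  rcases eq_or_ne lam 0 with rfl | hlam
  · exact ⟨0, by rw [zero_smul, E.F_zero, zero_smul]⟩
  · have hlx : lam • x ≠ 0 := smul_ne_zero hlam hx0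
    obtain ⟨c', hc', hd'⟩ := E.F_dir ha hb hlx
    obtain ⟨c, hc, hd⟩ := E.F_dir ha hb hx0
    refine ⟨c' * c⁻¹, ?_⟩
    rw [hd', E.hsmul lam x hlam hx0, hd, smul_smul, mul_assoc, inv_mul_cancel₀ hc,
      mul_one]

theorem F_not_mem {u v : V1} (hu0 : u ≠ 0) (hv : v ∉ span K1 {u}) :
    E.F a b ha hb u ∉ span K2 {E.F a b ha hb v} := by
  have hv0 : v ≠ 0 := nz_of_not_mem hv
  obtain ⟨cu, hcu, hdu⟩ := E.F_dir ha hb hu0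
  obtain ⟨cv, hcv, hdv⟩ := E.F_dir ha hb hv0
  have huv : u ∉ span K1 {v} := not_mem_symm hu0 hv
  have : E.g u ∉ span K2 {E.g v} := E.img_notmem hv0 huv
  rw [hdu, hdv]
  exact smul_not_mem_smul hcu hcv this

theorem tau_congr {lam : K1} {u v : V1} {τu τv : K2} (hu0 : u ≠ 0)
    (hv : v ∉ span K1 {u})
    (eu : E.F a b ha hb (lam • u) = τu • E.F a b ha hb u)
    (ev : E.F a b ha hb (lam • v) = τv • E.F a b ha hb v) : τu = τv := by
  have hv0 : v ≠ 0 := nz_of_not_mem hv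
  have huv0 : u + v ≠ 0 := add_nz hv
  obtain ⟨τw, ew⟩ := E.tau_ex ha hb lam huv0
  have hsum : E.F a b ha hb (lam • u) + E.F a b ha hb (lam • v) =
      τw • E.F a b ha hb u + τw • E.F a b ha hb v := by
    rw [← smul_add, ← E.F_add ha hb, ← E.F_add ha hb, ← smul_add]
    exact ew
  rw [eu, ev] at hsum
  have hFuv : E.F a b ha hb u ∉ span K2 {E.F a b ha hb v} := E.F_not_mem ha hb hu0 hv
  have hFv : E.F a b ha hb v ≠ 0 := E.F_nz ha hb hv0
  obtain ⟨r1, r2⟩ := uniq2 hFuv hFv hsum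
  rw [r1, r2]

theorem sigma_smul (lam : K1) (x : V1) :
    E.F a b ha hb (lam • x) = E.sigma ha hb lam • E.F a b ha hb x := by
  rcases eq_or_ne x 0 with rfl | hx0
  · rw [smul_zero, E.F_zero, smul_zero]
  obtain ⟨τ, eτ⟩ := E.tau_ex ha hb lam hx0
  rw [eτ]
  congr 1
  by_cases hx : x ∈ span K1 {a}
  · obtain ⟨z, hz⟩ := E.houtside a a
    have hza : z ∉ span K1 {a} := by rwa [Set.pair_eq_singleton] at hz
    have hz0 : z ≠ 0 := nz_of_not_mem hza
    have hzx : z ∉ span K1 {x} := fun hm =>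
      hza ((span_le.2 (Set.singleton_subset_iff.2 hx)) hm)
    obtain ⟨τz, ez⟩ := E.tau_ex ha hb lam hz0
    have r1 : E.sigma ha hb lam = τz :=
      E.tau_congr ha hb ha hza (E.sigma_spec ha hb lam) ez
    have r2 : τ = τz := E.tau_congr ha hb hx0 hzx eτ ez
    rw [r2, r1]
  · exact (E.tau_congr ha hb ha hx (E.sigma_spec ha hb lam) eτ).symm

theorem sigma_zero : E.sigma ha hb 0 = 0 :=
  (E.sigma_uniq ha hb (by rw [zero_smul, E.F_zero, zero_smul])).symm

theorem sigma_one : E.sigma ha hb 1 = 1 :=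
  (E.sigma_uniq ha hb (by rw [one_smul, one_smul])).symm

theorem sigma_add (lam mu : K1) :
    E.sigma ha hb (lam + mu) = E.sigma ha hb lam + E.sigma ha hb mu :=
  (E.sigma_uniq ha hb (by
    rw [add_smul, E.F_add ha hb, E.sigma_spec ha hb lam, E.sigma_spec ha hb mu,
      add_smul])).symm

theorem sigma_mul (lam mu : K1) :
    E.sigma ha hb (lam * mu) = E.sigma ha hb lam * E.sigma ha hb mu :=
  (E.sigma_uniq ha hb (by
    rw [mul_smul, E.sigma_smul ha hb lam (mu • a), E.sigma_spec ha hb mu, smul_smul])).symm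

theorem sigma_inj : Function.Injective (E.sigma ha hb) := by
  intro lam mu h
  by_contra hne
  have hsub : lam - mu ≠ 0 := sub_ne_zero.2 hne
  have h1 : E.F a b ha hb ((lam - mu) • a) = 0 := by
    rw [sub_smul, E.F_sub ha hb, E.sigma_spec ha hb lam, E.sigma_spec ha hb mu, h,
      sub_self]
  exact E.F_nz ha hb (smul_ne_zero hsub ha) h1

end Sigma

section Bij

variable {a b : V1} (ha : a ≠ 0) (hb : b ∉ span K1 {a})

theorem sigma_surj : Function.Surjective (E.sigma ha hb) := by
  intro t
  rcases eq_or_ne t 0 with rfl | ht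
  · exact ⟨0, E.sigma_zero ha hb⟩
  have hb0 : b ≠ 0 := nz_of_not_mem hb
  have hab : a ∉ span K1 {b} := not_mem_symm ha hb
  obtain ⟨ca, hca, hda⟩ := E.F_dir ha hb ha
  obtain ⟨cb, hcb, hdb⟩ := E.F_dir ha hb hb0
  have hgagb : E.g a ∉ span K2 {E.g b} := E.img_notmem hb0 hab
  have hgbga : E.g b ∉ span K2 {E.g a} := E.img_notmem ha hb
  have hFaFb : E.F a b ha hb a ∉ span K2 {E.F a b ha hb b} := E.F_not_mem ha hb ha hb
  have hFb : E.F a b ha hb b ≠ 0 := E.F_nz ha hb hb0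
  set w := E.F a b ha hb a + t • E.F a b ha hb b with hw
  have hw0 : w ≠ 0 := by
    intro h0
    rw [hw] at h0
    refine hFaFb (mem_span_singleton.2 ⟨-t, ?_⟩)
    rw [neg_smul]
    exact (eq_neg_of_add_eq_zero_left h0).symm
  obtain ⟨x, hx0, e, he0, hgx⟩ := E.hsurj w hw0
  -- x is not in span{a} nor span{b}
  have hwab : w = ca • E.g a + (t * cb) • E.g b := by
    rw [hw, hda, hdb, smul_smul]
  have hxa : x ∉ span K1 {a} := by
    intro hm
    have h1 : E.g x ∈ span K2 {E.g a} := (E.col1 hx0 ha).1 hm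
    rw [hgx] at h1
    have h2 : w ∈ span K2 {E.g a} := by
      have := smul_mem (span K2 {E.g a}) e⁻¹ h1
      rwa [inv_smul_smul₀ he0] at this
    have h3 : (t * cb) • E.g b ∈ span K2 {E.g a} := by
      have := sub_mem h2 (mem_span_singleton.2 ⟨ca, rfl⟩ :
        ca • E.g a ∈ span K2 {E.g a})
      rwa [hwab, add_sub_cancel_left] at this
    have h4 : E.g b ∈ span K2 {E.g a} := by
      have := smul_mem (span K2 {E.g a}) (t * cb)⁻¹ h3
      rwa [inv_smul_smul₀ (mul_ne_zero ht hcb)] at this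
    exact hgbga h4
  have hxb : x ∉ span K1 {b} := by
    intro hm
    have h1 : E.g x ∈ span K2 {E.g b} := (E.col1 hx0 hb0).1 hm
    rw [hgx] at h1
    have h2 : w ∈ span K2 {E.g b} := by
      have := smul_mem (span K2 {E.g b}) e⁻¹ h1
      rwa [inv_smul_smul₀ he0] at this
    have h3 : ca • E.g a ∈ span K2 {E.g b} := by
      have := sub_mem h2 (mem_span_singleton.2 ⟨t * cb, rfl⟩ :
        (t * cb) • E.g b ∈ span K2 {E.g b})
      rwa [hwab, add_sub_cancel_right] at this
    have h4 : E.g a ∈ span K2 {E.g b} := by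
      have := smul_mem (span K2 {E.g b}) ca⁻¹ h3
      rwa [inv_smul_smul₀ hca] at this
    exact hgagb h4
  -- x ∈ span {a, b}
  have hxab : x ∈ span K1 {a, b} := by
    refine (E.hcol x a b hx0 ha hb0).2 ?_
    rw [hgx]
    refine smul_mem _ e (mem_span_pair.2 ⟨ca, t * cb, hwab.symm⟩)
  rcases mem_span_pair.1 hxab with ⟨α, β, hαβ⟩
  have hα : α ≠ 0 := by
    rintro rfl
    rw [zero_smul, zero_add] at hαβ
    exact hxb (mem_span_singleton.2 ⟨β, hαβ⟩)
  have hβ : β ≠ 0 := by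
    rintro rfl
    rw [zero_smul, add_zero] at hαβ
    exact hxa (mem_span_singleton.2 ⟨α, hαβ⟩)
  -- normalize
  have hx' : α⁻¹ • x = a + (α⁻¹ * β) • b := by
    rw [← hαβ, smul_add, smul_smul, smul_smul, inv_mul_cancel₀ hα, one_smul]
  have hx'0 : α⁻¹ • x ≠ 0 := smul_ne_zero (inv_ne_zero hα) hx0
  have hgx' : E.g (α⁻¹ • x) = E.g x := E.hsmul α⁻¹ x (inv_ne_zero hα) hx0
  obtain ⟨c', hc', hd'⟩ := E.F_dir ha hb hx'0
  have hFx' : E.F a b ha hb (α⁻¹ • x) =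
      E.F a b ha hb a + E.sigma ha hb (α⁻¹ * β) • E.F a b ha hb b := by
    rw [hx', E.F_add ha hb, E.sigma_smul ha hb]
  have hFx'2 : E.F a b ha hb (α⁻¹ • x) =
      (c' * e) • E.F a b ha hb a + ((c' * e) * t) • E.F a b ha hb b := by
    rw [hd', hgx', hgx, smul_smul, smul_add, smul_smul]
  have hcomp : (1 : K2) • E.F a b ha hb a + E.sigma ha hb (α⁻¹ * β) • E.F a b ha hb b =
      (c' * e) • E.F a b ha hb a + ((c' * e) * t) • E.F a b ha hb b := by
    rw [one_smul, ← hFx', hFx'2]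
  obtain ⟨r1, r2⟩ := uniq2 hFaFb hFb hcomp
  refine ⟨α⁻¹ * β, ?_⟩
  rw [r2, ← r1, one_mul]

theorem F_inj : Function.Injective (E.F a b ha hb) := by
  intro x y hxy
  by_contra hne
  have hsub : x - y ≠ 0 := sub_ne_zero.2 hne
  have : E.F a b ha hb (x - y) = 0 := by
    rw [E.F_sub ha hb, hxy, sub_self]
  exact E.F_nz ha hb hsub this

theorem F_surj : Function.Surjective (E.F a b ha hb) := by
  intro w
  rcases eq_or_ne w 0 with rfl | hw0
  · exact ⟨0, E.F_zero ha hb⟩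
  obtain ⟨x, hx0, e, he0, hgx⟩ := E.hsurj w hw0
  obtain ⟨c, hc, hd⟩ := E.F_dir ha hb hx0
  have hce : c * e ≠ 0 := mul_ne_zero hc he0
  obtain ⟨mu, hmu⟩ := E.sigma_surj ha hb (c * e)⁻¹
  refine ⟨mu • x, ?_⟩
  rw [E.sigma_smul ha hb, hmu, hd, hgx, smul_smul, smul_smul, mul_assoc,
    inv_mul_cancel₀ hce, one_smul]

end Bij

/-- Main packaged form of the fundamental theorem, at the level of the data `FT`. -/
theorem main (E : FT K1 K2 V1 V2) :
    ∃ (σ : K1 ≃+* K2) (f : V1 →ₛₗ[σ.toRingHom] V2), Function.Bijective f ∧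
      ∀ v : V1, v ≠ 0 → ∃ c : K2, c ≠ 0 ∧ f v = c • E.g v := by
  obtain ⟨a, hA⟩ := E.houtside 0 0
  have ha : a ≠ 0 := fun h => hA (by rw [h]; exact zero_mem _)
  obtain ⟨b, hB⟩ := E.houtside a a
  have hb : b ∉ span K1 {a} := by rwa [Set.pair_eq_singleton] at hB
  let σhom : K1 →+* K2 :=
    { toFun := E.sigma ha hb
      map_one' := E.sigma_one ha hb
      map_mul' := E.sigma_mul ha hb
      map_zero' := E.sigma_zero ha hb
      map_add' := E.sigma_add ha hb }
  have hbij : Function.Bijective σhom := ⟨E.sigma_inj ha hb, E.sigma_surj ha hb⟩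
  let σ : K1 ≃+* K2 := RingEquiv.ofBijective σhom hbij
  let f : V1 →ₛₗ[σ.toRingHom] V2 :=
    { toFun := E.F a b ha hb
      map_add' := E.F_add ha hb
      map_smul' := fun r x => E.sigma_smul ha hb r x }
  refine ⟨σ, f, ⟨E.F_inj ha hb, E.F_surj ha hb⟩, fun v hv => E.F_dir ha hb hv⟩

end FT

end FTPGaux

open FTPGaux Projectivization Cardinal in
/-- **Uniqueness of homogeneous coordinates.** A collinearity-preserving and -reflecting
bijection `φ : ℙ(V1) → ℙ(V2)`, where `dim V1 ≥ 3`, is induced by a bijective semilinear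
map `f : V1 → V2` over a ring isomorphism `σ : K1 → K2`. -/
theorem uniqueness_homogeneous_coordinates {K1 K2 V1 V2 : Type*}
    [DivisionRing K1] [DivisionRing K2]
    [AddCommGroup V1] [Module K1 V1] [AddCommGroup V2] [Module K2 V2]
    (hdim : 3 ≤ Module.rank K1 V1)
    (φ : Projectivization K1 V1 ≃ Projectivization K2 V2)
    (hφ : ∀ (x y z : V1) (hx : x ≠ 0) (hy : y ≠ 0) (hz : z ≠ 0),
      x ∈ Submodule.span K1 {y, z} ↔
        (φ (Projectivization.mk K1 x hx)).rep ∈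
          Submodule.span K2 {(φ (Projectivization.mk K1 y hy)).rep,
            (φ (Projectivization.mk K1 z hz)).rep}) :
    ∃ (σ : K1 ≃+* K2) (f : V1 →ₛₗ[σ.toRingHom] V2),
      Function.Bijective f ∧
      ∀ (v : V1) (hv : v ≠ 0), ∃ hfv : f v ≠ 0,
        φ (Projectivization.mk K1 v hv) = Projectivization.mk K2 (f v) hfv := by
  classical
  set g : V1 → V2 := fun x => if h : x = 0 then 0 else (φ (mk K1 x h)).rep with hgdef
  have gdef : ∀ (x : V1) (hx : x ≠ 0), g x = (φ (mk K1 x hx)).rep := fun x hx => dif_neg hx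
  have houtside : ∀ u v : V1, ∃ w, w ∉ Submodule.span K1 {u, v} := by
    intro u v
    by_contra hcon
    push_neg at hcon
    have htop : Submodule.span K1 {u, v} = ⊤ := eq_top_iff.2 fun w _ => hcon w
    have h1 : Module.rank K1 V1 ≤ #({u, v} : Set V1) := by
      rw [← rank_top K1 V1, ← htop]
      exact rank_span_le _
    have h2 : #({u, v} : Set V1) ≤ 2 := by
      refine le_trans (Cardinal.mk_insert_le) ?_
      rw [Cardinal.mk_singleton]
      norm_num
    have : (3 : Cardinal) ≤ 2 := hdim.trans (h1.trans h2)
    norm_num at this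
  let E : FT K1 K2 V1 V2 :=
    { g := g
      hg0 := fun x hx => by rw [gdef x hx]; exact (φ (mk K1 x hx)).rep_nonzero
      hsmul := fun c x hc hx => by
        have hcx : c • x ≠ 0 := smul_ne_zero hc hx
        rw [gdef _ hcx, gdef x hx]
        have : mk K1 (c • x) hcx = mk K1 x hx :=
          (mk_eq_mk_iff' K1 _ _ hcx hx).2 ⟨c, rfl⟩
        rw [this]
      hcol := fun x y z hx hy hz => by
        rw [gdef x hx, gdef y hy, gdef z hz]
        exact hφ x y z hx hy hz
      hsurj := fun w hw => by
        refine ⟨(φ.symm (mk K2 w hw)).rep, (φ.symm (mk K2 w hw)).rep_nonzero, ?_⟩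
        obtain ⟨u, hu⟩ := exists_smul_eq_mk_rep K2 w hw
        rw [Units.smul_def] at hu
        refine ⟨(u : K2), u.ne_zero, ?_⟩
        rw [gdef _ (φ.symm (mk K2 w hw)).rep_nonzero, mk_rep, Equiv.apply_symm_apply, ← hu]
      houtside := houtside }
  obtain ⟨σ, f, hbij, hdir⟩ := E.main
  refine ⟨σ, f, hbij, fun v hv => ?_⟩
  obtain ⟨c, hc, hfv⟩ := hdir v hv
  have hgv : E.g v = (φ (mk K1 v hv)).rep := gdef v hv
  have hfv0 : f v ≠ 0 := by
    rw [hfv, hgv]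
    exact smul_ne_zero hc (φ (mk K1 v hv)).rep_nonzero
  refine ⟨hfv0, ?_⟩
  have : mk K2 (f v) hfv0 = mk K2 (φ (mk K1 v hv)).rep (φ (mk K1 v hv)).rep_nonzero := by
    refine (mk_eq_mk_iff' K2 _ _ hfv0 (φ (mk K1 v hv)).rep_nonzero).2 ⟨c, ?_⟩
    rw [hfv, hgv]
  rw [this, mk_rep]
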